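/- Let m ≥ 1, let D_a ⊆ ℂ^m be a closed and bounded set such that for every M ∈ D_a all m roots of the polynomial P(M) have strictly negative real part, and let D_w ⊆ ℂ^m be a bounded set. Then there exist C̃ ≥ 0 and κ > 0 such that for every M ∈ D_a, every N ∈ D_w, and every solution w of the Cauchy problem with coefficients M and initial data N, one has |w^{(i)}(ξ)| ≤ C̃ (1 + ξ^{m−1}) e^{−κ ξ} for all i ∈ {0, …, m−1} and all ξ ≥ 0. -/

import Mathlib

open Polynomial

/-- The characteristic polynomial `λ^m - a_{m-1} λ^{m-1} - ⋯ - a_1 λ - a_0`. -/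
noncomputable def charPoly (m : ℕ) (M : Fin m → ℂ) : Polynomial ℂ :=
  X ^ m - ∑ j : Fin m, C (M j) * X ^ (j : ℕ)

/-- `w` is a solution of the Cauchy problem with coefficients `M` and initial data `N`. -/
def IsCauchySolution (m : ℕ) (M N : Fin m → ℂ) (w : ℝ → ℂ) : Prop :=
  (∀ i < m, Differentiable ℝ (iteratedDeriv i w)) ∧
  (∀ ξ : ℝ, 0 ≤ ξ → iteratedDeriv m w ξ = ∑ j : Fin m, M j * iteratedDeriv (j : ℕ) w ξ) ∧
  (∀ j : Fin m, iteratedDeriv (j : ℕ) w 0 = N j)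

namespace UniformDecayAux

/-- Application of the differential operator `∏ (D - r)` along a list of roots. -/
noncomputable def opApply : List ℂ → (ℝ → ℂ) → ℝ → ℂ
  | [], w => w
  | r :: l, w => opApply l fun ξ => deriv w ξ - r * w ξ

lemma iteratedDeriv_shift (w : ℝ → ℂ) (r : ℂ) (n : ℕ)
    (hw : ∀ i < n + 1, Differentiable ℝ (iteratedDeriv i w)) :
    ∀ i ≤ n, iteratedDeriv i (fun ξ => deriv w ξ - r * w ξ)
      = fun ξ => iteratedDeriv (i + 1) w ξ - r * iteratedDeriv i w ξ := by
  intro i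
  induction i with
  | zero =>
    intro _
    simp [iteratedDeriv_one]
  | succ i ih =>
    intro hi
    have h1 : i ≤ n := Nat.le_of_succ_le hi
    have e1 := ih h1
    have hd1 : Differentiable ℝ (iteratedDeriv (i + 1) w) := hw (i + 1) (Nat.lt_succ_of_le hi)
    have hd0 : Differentiable ℝ (iteratedDeriv i w) := hw i (by omega)
    funext ξ
    rw [iteratedDeriv_succ, e1]
    have h2 : deriv (fun ξ => iteratedDeriv (i + 1) w ξ - r * iteratedDeriv i w ξ) ξ
        = deriv (iteratedDeriv (i + 1) w) ξ - r * deriv (iteratedDeriv i w) ξ := by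
      rw [deriv_fun_sub (hd1 ξ) ((hd0 ξ).const_mul r), deriv_const_mul r (hd0 ξ)]
    rw [h2, ← iteratedDeriv_succ, ← iteratedDeriv_succ]

lemma diff_shift (w : ℝ → ℂ) (r : ℂ) (n : ℕ)
    (hw : ∀ i < n + 1, Differentiable ℝ (iteratedDeriv i w)) :
    ∀ i < n, Differentiable ℝ (iteratedDeriv i fun ξ => deriv w ξ - r * w ξ) := by
  intro i hi
  rw [iteratedDeriv_shift w r n hw i hi.le]
  exact (hw (i + 1) (by omega)).sub ((hw i (by omega)).const_mul r)

lemma prodLin_monic (l : List ℂ) : ((l.map fun r => X - Polynomial.C r).prod).Monic := by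
  induction l with
  | nil => simpa using monic_one
  | cons r l ih => simpa using (monic_X_sub_C r).mul ih

lemma prodLin_natDegree (l : List ℂ) :
    ((l.map fun r => X - Polynomial.C r).prod).natDegree = l.length := by
  induction l with
  | nil => simp
  | cons r l ih =>
    simp only [List.map_cons, List.prod_cons, List.length_cons]
    rw [(monic_X_sub_C r).natDegree_mul (prodLin_monic l), natDegree_X_sub_C, ih]
    omega

lemma sum_shift (n : ℕ) (p : Polynomial ℂ) (r : ℂ) (hdeg : p.coeff (n + 1) = 0) (S : ℕ → ℂ) :
    ∑ j ∈ Finset.range (n + 1), p.coeff j * (S (j + 1) - r * S j)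
      = ∑ j ∈ Finset.range (n + 1 + 1), (p * (X - Polynomial.C r)).coeff j * S j := by
  have hc0 : (p * (X - Polynomial.C r)).coeff 0 = -(r * p.coeff 0) := by
    rw [Polynomial.mul_coeff_zero]
    simp only [coeff_sub, coeff_X_zero, coeff_C_zero]
    ring
  have e1 : ∀ j, (p * (X - Polynomial.C r)).coeff (j + 1) * S (j + 1)
      = p.coeff j * S (j + 1) - r * (p.coeff (j + 1) * S (j + 1)) := by
    intro j
    rw [Polynomial.coeff_mul_X_sub_C]
    ring
  have hg : ∑ j ∈ Finset.range (n + 1), r * (p.coeff j * S j)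
      = ∑ j ∈ Finset.range (n + 1), r * (p.coeff (j + 1) * S (j + 1)) + r * (p.coeff 0 * S 0) := by
    have h2 : ∑ j ∈ Finset.range (n + 2), r * (p.coeff j * S j)
        = ∑ j ∈ Finset.range (n + 1), r * (p.coeff j * S j) := by
      rw [Finset.sum_range_succ, hdeg]
      ring
    rw [← h2, Finset.sum_range_succ']
  calc ∑ j ∈ Finset.range (n + 1), p.coeff j * (S (j + 1) - r * S j)
      = ∑ j ∈ Finset.range (n + 1), (p.coeff j * S (j + 1) - r * (p.coeff j * S j)) := by
        apply Finset.sum_congr rfl; intro j _; ring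
    _ = ∑ j ∈ Finset.range (n + 1), p.coeff j * S (j + 1)
        - ∑ j ∈ Finset.range (n + 1), r * (p.coeff j * S j) := Finset.sum_sub_distrib _ _
    _ = ∑ j ∈ Finset.range (n + 1), p.coeff j * S (j + 1)
        - (∑ j ∈ Finset.range (n + 1), r * (p.coeff (j + 1) * S (j + 1)) + r * (p.coeff 0 * S 0)) := by
        rw [hg]
    _ = ∑ j ∈ Finset.range (n + 1), (p.coeff j * S (j + 1) - r * (p.coeff (j + 1) * S (j + 1)))
        - r * (p.coeff 0 * S 0) := by
        rw [Finset.sum_sub_distrib]; ring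
    _ = ∑ j ∈ Finset.range (n + 1), (p * (X - Polynomial.C r)).coeff (j + 1) * S (j + 1)
        + (p * (X - Polynomial.C r)).coeff 0 * S 0 := by
        rw [hc0]
        have e2 : ∑ j ∈ Finset.range (n + 1), (p * (X - Polynomial.C r)).coeff (j + 1) * S (j + 1)
            = ∑ j ∈ Finset.range (n + 1), (p.coeff j * S (j + 1) - r * (p.coeff (j + 1) * S (j + 1))) :=
          Finset.sum_congr rfl fun j _ => e1 j
        rw [e2]
        ring
    _ = ∑ j ∈ Finset.range (n + 1 + 1), (p * (X - Polynomial.C r)).coeff j * S j := by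
        conv_rhs => rw [Finset.sum_range_succ']
  rfl

lemma opApply_eq_sum : ∀ (l : List ℂ) (w : ℝ → ℂ),
    (∀ i < l.length, Differentiable ℝ (iteratedDeriv i w)) → ∀ ξ : ℝ,
    opApply l w ξ = ∑ j ∈ Finset.range (l.length + 1),
      ((l.map fun r => X - Polynomial.C r).prod).coeff j * iteratedDeriv j w ξ := by
  intro l
  induction l with
  | nil => intro w _ ξ; simp [opApply]
  | cons r l ih =>
    intro w hw ξ
    have hw' : ∀ i < l.length + 1, Differentiable ℝ (iteratedDeriv i w) := by
      simpa using hw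
    have hud : ∀ i < l.length, Differentiable ℝ
        (iteratedDeriv i fun ξ => deriv w ξ - r * w ξ) := diff_shift w r l.length hw'
    have h1 : opApply (r :: l) w ξ = opApply l (fun ξ => deriv w ξ - r * w ξ) ξ := rfl
    rw [h1, ih _ hud ξ]
    have hprod : ((r :: l).map fun r => X - Polynomial.C r).prod
        = (l.map fun r => X - Polynomial.C r).prod * (X - Polynomial.C r) := by
      simp only [List.map_cons, List.prod_cons]
      ring
    have hdeg : ((l.map fun r => X - Polynomial.C r).prod).coeff (l.length + 1) = 0 := by
      apply coeff_eq_zero_of_natDegree_lt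
      rw [prodLin_natDegree]
      omega
    have hrw : ∀ j ∈ Finset.range (l.length + 1),
        ((l.map fun r => X - Polynomial.C r).prod).coeff j
            * iteratedDeriv j (fun ξ => deriv w ξ - r * w ξ) ξ
        = ((l.map fun r => X - Polynomial.C r).prod).coeff j
            * (iteratedDeriv (j + 1) w ξ - r * iteratedDeriv j w ξ) := by
      intro j hj
      rw [Finset.mem_range] at hj
      rw [iteratedDeriv_shift w r l.length hw' j (by omega)]
    rw [Finset.sum_congr rfl hrw, hprod]
    exact sum_shift l.length _ r hdeg (fun j => iteratedDeriv j w ξ)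

lemma first_order_decay (v u : ℝ → ℂ) (r : ℂ) (κ A : ℝ) (hκ : 0 < κ) (hA : 0 ≤ A)
    (hv : Differentiable ℝ v) (hu : ContinuousOn u (Set.Ici 0))
    (hre : r.re ≤ -(2 * κ))
    (heq : ∀ ξ : ℝ, 0 ≤ ξ → deriv v ξ = r * v ξ + u ξ)
    (hub : ∀ ξ : ℝ, 0 ≤ ξ → ‖u ξ‖ ≤ A * Real.exp (-κ * ξ)) :
    ∀ ξ : ℝ, 0 ≤ ξ → ‖v ξ‖ ≤ (‖v 0‖ + A / κ) * Real.exp (-κ * ξ) := by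
  intro ξ hξ
  have hE : ∀ t : ℝ, HasDerivAt (fun t : ℝ => Complex.exp (-(r * t)))
      (-r * Complex.exp (-(r * t))) t := by
    intro t
    have h1 : HasDerivAt (fun z : ℂ => Complex.exp (-(r * z)))
        (Complex.exp (-(r * (t : ℂ))) * -(r * 1)) (t : ℂ) :=
      (((hasDerivAt_id (t : ℂ)).const_mul r).neg).cexp
    have h2 := h1.comp_ofReal
    simpa [mul_comm] using h2
  have hg : ∀ t ∈ Set.uIcc (0 : ℝ) ξ, HasDerivAt (fun t : ℝ => Complex.exp (-(r * t)) * v t)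
      (Complex.exp (-(r * t)) * u t) t := by
    intro t ht
    have ht0 : (0 : ℝ) ≤ t := by
      rw [Set.uIcc_of_le hξ] at ht; exact ht.1
    have h3 := (hE t).mul (hv t).hasDerivAt
    have h4 : Complex.exp (-(r * t)) * u t
        = -r * Complex.exp (-(r * t)) * v t + Complex.exp (-(r * t)) * deriv v t := by
      rw [heq t ht0]; ring
    rw [h4]; exact h3
  have hInt : IntervalIntegrable (fun t : ℝ => Complex.exp (-(r * t)) * u t)
      MeasureTheory.volume 0 ξ := by
    apply ContinuousOn.intervalIntegrable
    have c1 : Continuous fun t : ℝ => Complex.exp (-(r * t)) :=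
      Complex.continuous_exp.comp (continuous_const.mul Complex.continuous_ofReal).neg
    apply ContinuousOn.mul c1.continuousOn
    apply hu.mono
    rw [Set.uIcc_of_le hξ]
    exact fun x hx => hx.1
  have hFTC := intervalIntegral.integral_eq_sub_of_hasDerivAt hg hInt
  have h0 : Complex.exp (-(r * ((0 : ℝ) : ℂ))) = 1 := by simp
  have hinv : Complex.exp (r * ξ) * Complex.exp (-(r * ξ)) = 1 := by
    rw [← Complex.exp_add]; simp
  have hv' : v ξ = Complex.exp (r * ξ) * v 0
      + ∫ t in (0:ℝ)..ξ, Complex.exp (r * ξ) * (Complex.exp (-(r * t)) * u t) := by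
    rw [intervalIntegral.integral_const_mul, hFTC, h0]
    calc v ξ = (Complex.exp (r * ξ) * Complex.exp (-(r * ξ))) * v ξ := by rw [hinv, one_mul]
      _ = Complex.exp (r * ξ) * v 0
          + Complex.exp (r * ξ) * (Complex.exp (-(r * ξ)) * v ξ - 1 * v 0) := by ring
  have hb1 : ‖Complex.exp (r * ξ) * v 0‖ ≤ Real.exp (-κ * ξ) * ‖v 0‖ := by
    rw [norm_mul]
    apply mul_le_mul_of_nonneg_right _ (norm_nonneg _)
    rw [Complex.norm_exp]
    apply Real.exp_le_exp.mpr
    have : (r * (ξ : ℂ)).re = r.re * ξ := by simp [Complex.mul_re]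
    rw [this]
    nlinarith
  have hbInt : ‖∫ t in (0:ℝ)..ξ, Complex.exp (r * ξ) * (Complex.exp (-(r * t)) * u t)‖
      ≤ A / κ * Real.exp (-κ * ξ) := by
    have hbd : ∀ᵐ t : ℝ ∂(MeasureTheory.volume.restrict (Set.uIoc (0:ℝ) ξ)),
        ‖Complex.exp (r * ξ) * (Complex.exp (-(r * t)) * u t)‖
          ≤ A * Real.exp (-(2 * κ) * ξ) * Real.exp (κ * t) := by
      apply MeasureTheory.ae_restrict_of_forall_mem measurableSet_uIoc
      intro t ht
      rw [Set.uIoc_of_le hξ] at ht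
      obtain ⟨ht0, htξ⟩ := ht
      have hre1 : (r * (ξ : ℂ)).re = r.re * ξ := by simp [Complex.mul_re]
      have hre2 : (-(r * (t : ℂ))).re = -(r.re * t) := by simp [Complex.mul_re]
      rw [norm_mul, norm_mul,
        Complex.norm_exp, Complex.norm_exp, hre1, hre2]
      have hu1 : ‖u t‖ ≤ A * Real.exp (-κ * t) := hub t ht0.le
      calc Real.exp (r.re * ξ) * (Real.exp (-(r.re * t)) * ‖u t‖)
          ≤ Real.exp (r.re * ξ) * (Real.exp (-(r.re * t)) * (A * Real.exp (-κ * t))) := by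
            apply mul_le_mul_of_nonneg_left _ (Real.exp_nonneg _)
            exact mul_le_mul_of_nonneg_left hu1 (Real.exp_nonneg _)
        _ = A * Real.exp (r.re * ξ + -(r.re * t) + -κ * t) := by
            rw [Real.exp_add, Real.exp_add]; ring
        _ ≤ A * Real.exp (-(2 * κ) * ξ + κ * t) := by
            apply mul_le_mul_of_nonneg_left _ hA
            apply Real.exp_le_exp.mpr
            nlinarith
        _ = A * Real.exp (-(2 * κ) * ξ) * Real.exp (κ * t) := by
            rw [Real.exp_add]; ring
    have hgint : IntervalIntegrable (fun t => A * Real.exp (-(2 * κ) * ξ) * Real.exp (κ * t))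
        MeasureTheory.volume 0 ξ := by
      apply Continuous.intervalIntegrable
      exact continuous_const.mul (Real.continuous_exp.comp (continuous_const.mul continuous_id))
    have hmain := intervalIntegral.norm_integral_le_abs_of_norm_le hbd hgint
    -- compute the integral of the bound
    have hexp : ∀ t ∈ Set.uIcc (0:ℝ) ξ, HasDerivAt (fun t => Real.exp (κ * t) / κ)
        (Real.exp (κ * t)) t := by
      intro t _
      have h5 := ((hasDerivAt_id t).const_mul κ).exp
      have h6 := h5.div_const κ
      have h7 : Real.exp (κ * id t) * (κ * 1) / κ = Real.exp (κ * t) := by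
        field_simp
        rfl
      rw [h7] at h6
      simpa using h6
    have hexpint : IntervalIntegrable (fun t => Real.exp (κ * t)) MeasureTheory.volume 0 ξ := by
      apply Continuous.intervalIntegrable
      exact Real.continuous_exp.comp (continuous_const.mul continuous_id)
    have hint2 := intervalIntegral.integral_eq_sub_of_hasDerivAt hexp hexpint
    have hval : (∫ t in (0:ℝ)..ξ, A * Real.exp (-(2 * κ) * ξ) * Real.exp (κ * t))
        = A * Real.exp (-(2 * κ) * ξ) * (Real.exp (κ * ξ) / κ - Real.exp (κ * 0) / κ) := by
      rw [intervalIntegral.integral_const_mul, hint2]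
    have hval2 : A * Real.exp (-(2 * κ) * ξ) * (Real.exp (κ * ξ) / κ - Real.exp (κ * 0) / κ)
        ≤ A / κ * Real.exp (-κ * ξ) := by
      rw [mul_zero, Real.exp_zero]
      have e2 : Real.exp (-(2 * κ) * ξ) * Real.exp (κ * ξ) = Real.exp (-κ * ξ) := by
        rw [← Real.exp_add]
        congr 1
        ring
      have e3 : Real.exp (-(2 * κ) * ξ) ≥ 0 := Real.exp_nonneg _
      have e4 : Real.exp (-(2 * κ) * ξ) * (Real.exp (κ * ξ) / κ - 1 / κ)
          = (Real.exp (-κ * ξ) - Real.exp (-(2 * κ) * ξ)) / κ := by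
        rw [← e2]; field_simp
      rw [mul_assoc, e4]
      calc A * ((Real.exp (-κ * ξ) - Real.exp (-(2*κ) * ξ)) / κ)
          ≤ A * (Real.exp (-κ * ξ) / κ) := by
            apply mul_le_mul_of_nonneg_left _ hA
            gcongr
            linarith [Real.exp_nonneg (-(2*κ) * ξ)]
        _ = A / κ * Real.exp (-κ * ξ) := by ring
    have habs : |∫ t in (0:ℝ)..ξ, A * Real.exp (-(2 * κ) * ξ) * Real.exp (κ * t)|
        = ∫ t in (0:ℝ)..ξ, A * Real.exp (-(2 * κ) * ξ) * Real.exp (κ * t) := by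
      apply abs_of_nonneg
      apply intervalIntegral.integral_nonneg hξ
      intro t _
      positivity
    calc ‖∫ t in (0:ℝ)..ξ, Complex.exp (r * ξ) * (Complex.exp (-(r * t)) * u t)‖
        ≤ |∫ t in (0:ℝ)..ξ, A * Real.exp (-(2 * κ) * ξ) * Real.exp (κ * t)| := hmain
      _ = A * Real.exp (-(2 * κ) * ξ) * (Real.exp (κ * ξ) / κ - Real.exp (κ * 0) / κ) := by
          rw [habs, hval]
      _ ≤ A / κ * Real.exp (-κ * ξ) := hval2
  calc ‖v ξ‖ ≤ ‖Complex.exp (r * ξ) * v 0‖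
        + ‖∫ t in (0:ℝ)..ξ, Complex.exp (r * ξ) * (Complex.exp (-(r * t)) * u t)‖ := by
        rw [hv']; exact norm_add_le _ _
    _ ≤ Real.exp (-κ * ξ) * ‖v 0‖ + A / κ * Real.exp (-κ * ξ) := add_le_add hb1 hbInt
    _ = (‖v 0‖ + A / κ) * Real.exp (-κ * ξ) := by ring

lemma list_decay (κ R : ℝ) (hκ : 0 < κ) (hR : 0 ≤ R) :
    ∀ n : ℕ, ∃ C : ℝ, 0 ≤ C ∧ ∀ l : List ℂ, l.length = n →
      (∀ r ∈ l, ‖r‖ ≤ R ∧ r.re ≤ -(2 * κ)) →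
      ∀ w : ℝ → ℂ, (∀ i < n, Differentiable ℝ (iteratedDeriv i w)) →
      (∀ ξ : ℝ, 0 ≤ ξ → opApply l w ξ = 0) →
      ∀ B : ℝ, 0 ≤ B → (∀ j < n, ‖iteratedDeriv j w 0‖ ≤ B) →
      ∀ i < n, ∀ ξ : ℝ, 0 ≤ ξ → ‖iteratedDeriv i w ξ‖ ≤ C * B * Real.exp (-κ * ξ) := by
  intro n
  induction n with
  | zero => exact ⟨0, le_refl 0, fun _ _ _ _ _ _ _ _ _ i hi => absurd hi (Nat.not_lt_zero i)⟩
  | succ n ih =>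
    obtain ⟨C', hC', hIH⟩ := ih
    obtain ⟨C₀, hC₀⟩ : ∃ C₀ : ℝ, C₀ = 1 + C' * (1 + R) * (1 + 1 / κ) := ⟨_, rfl⟩
    have hC₀nn : 1 ≤ C₀ := by
      rw [hC₀]
      have : 0 ≤ C' * (1 + R) * (1 + 1 / κ) := by positivity
      linarith
    refine ⟨C₀ * (1 + R) ^ n, by positivity, ?_⟩
    rintro (_ | ⟨r, l⟩) hlen hl w hw hEq B hB hB0 i hi ξ hξ
    · simp at hlen
    have hlen' : l.length = n := by simpa using hlen
    have hw' : ∀ i < n + 1, Differentiable ℝ (iteratedDeriv i w) := hw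
    have hr := hl r (by simp)
    set u : ℝ → ℂ := fun ξ => deriv w ξ - r * w ξ with hu
    have hshift := iteratedDeriv_shift w r n hw'
    have hud : ∀ i < n, Differentiable ℝ (iteratedDeriv i u) := diff_shift w r n hw'
    have hl' : ∀ r' ∈ l, ‖r'‖ ≤ R ∧ r'.re ≤ -(2 * κ) := fun r' hr' => hl r' (by simp [hr'])
    have huEq : ∀ ξ : ℝ, 0 ≤ ξ → opApply l u ξ = 0 := hEq
    have hu0 : ∀ j < n, ‖iteratedDeriv j u 0‖ ≤ (1 + R) * B := by
      intro j hj
      rw [hshift j hj.le]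
      calc ‖iteratedDeriv (j + 1) w 0 - r * iteratedDeriv j w 0‖
          ≤ ‖iteratedDeriv (j + 1) w 0‖ + ‖r‖ * ‖iteratedDeriv j w 0‖ := by
            refine (norm_sub_le _ _).trans ?_
            rw [norm_mul]
        _ ≤ B + R * B := by
            have h1 := hB0 (j + 1) (by omega)
            have h2 := hB0 j (by omega)
            have h3 := mul_le_mul hr.1 h2 (norm_nonneg _) hR
            linarith
        _ = (1 + R) * B := by ring
    have hubd : ∀ ξ : ℝ, 0 ≤ ξ → ‖u ξ‖ ≤ C' * ((1 + R) * B) * Real.exp (-κ * ξ) := by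
      rcases Nat.eq_zero_or_pos n with h0 | hpos
      · intro ξ' hξ'
        have hlnil : l = [] := List.length_eq_zero_iff.mp (by omega)
        have : u ξ' = 0 := by
          have := hEq ξ' hξ'
          rwa [hlnil] at this
        rw [this, norm_zero]
        positivity
      · intro ξ' hξ'
        have := hIH l hlen' hl' u hud huEq ((1 + R) * B) (by positivity) hu0 0 hpos ξ' hξ'
        simpa [iteratedDeriv_zero] using this
    have hucont : ContinuousOn u (Set.Ici 0) := by
      rcases Nat.eq_zero_or_pos n with h0 | hpos
      · have hlnil : l = [] := List.length_eq_zero_iff.mp (by omega)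
        apply continuousOn_const.congr
        intro x hx
        have := hEq x hx
        rwa [hlnil] at this
      · have := hud 0 hpos
        rw [iteratedDeriv_zero] at this
        exact this.continuous.continuousOn
    have hwdiff : Differentiable ℝ w := by
      have := hw 0 (by omega)
      rwa [iteratedDeriv_zero] at this
    have hw0B : ‖w 0‖ ≤ B := by
      have := hB0 0 (by omega)
      rwa [iteratedDeriv_zero] at this
    have hfirst := first_order_decay w u r κ (C' * ((1 + R) * B)) hκ (by positivity)
      hwdiff hucont hr.2 (fun ξ' _ => by rw [hu]; ring) hubd
    -- main inner induction
    have main : ∀ i, i < n + 1 → ∀ ξ' : ℝ, 0 ≤ ξ' →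
        ‖iteratedDeriv i w ξ'‖ ≤ C₀ * (1 + R) ^ i * B * Real.exp (-κ * ξ') := by
      intro i
      induction i with
      | zero =>
        intro _ ξ' hξ'
        have h1 := hfirst ξ' hξ'
        have hE : 0 < Real.exp (-κ * ξ') := Real.exp_pos _
        rw [iteratedDeriv_zero]
        have hcoef : ‖w 0‖ + C' * ((1 + R) * B) / κ ≤ C₀ * (1 + R) ^ 0 * B := by
          have h2 : C' * ((1 + R) * B) / κ = C' * (1 + R) * B * (1 / κ) := by ring
          have h3 : 0 ≤ C' * (1 + R) * B := by positivity
          simp only [pow_zero, mul_one]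
          rw [hC₀]
          have h4 : (1 + C' * (1 + R) * (1 + 1 / κ)) * B
              = B + C' * (1 + R) * B + C' * (1 + R) * B * (1 / κ) := by ring
          rw [h4, h2]
          linarith
        calc ‖w ξ'‖ ≤ (‖w 0‖ + C' * ((1 + R) * B) / κ) * Real.exp (-κ * ξ') := h1
          _ ≤ C₀ * (1 + R) ^ 0 * B * Real.exp (-κ * ξ') :=
            mul_le_mul_of_nonneg_right hcoef hE.le
      | succ i ihh =>
        intro hi ξ' hξ'
        have hi' : i < n := by omega
        have hE : 0 < Real.exp (-κ * ξ') := Real.exp_pos _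
        have e := hshift i (by omega)
        have hsplit : iteratedDeriv (i + 1) w ξ' = iteratedDeriv i u ξ' + r * iteratedDeriv i w ξ' := by
          have : iteratedDeriv i u ξ' = iteratedDeriv (i + 1) w ξ' - r * iteratedDeriv i w ξ' := by
            rw [e]
          rw [this]; ring
        have h1 := hIH l hlen' hl' u hud huEq ((1 + R) * B) (by positivity) hu0 i hi' ξ' hξ'
        have h2 := ihh (by omega) ξ' hξ'
        have h3 : ‖r * iteratedDeriv i w ξ'‖ ≤ R * (C₀ * (1 + R) ^ i * B * Real.exp (-κ * ξ')) := by
          rw [norm_mul]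
          exact mul_le_mul hr.1 h2 (norm_nonneg _) hR
        have hpow : (1 : ℝ) ≤ (1 + R) ^ i := one_le_pow₀ (by linarith)
        calc ‖iteratedDeriv (i + 1) w ξ'‖
            ≤ ‖iteratedDeriv i u ξ'‖ + ‖r * iteratedDeriv i w ξ'‖ := by
              rw [hsplit]; exact norm_add_le _ _
          _ ≤ C' * ((1 + R) * B) * Real.exp (-κ * ξ')
              + R * (C₀ * (1 + R) ^ i * B * Real.exp (-κ * ξ')) := add_le_add h1 h3
          _ ≤ C₀ * (1 + R) ^ (i + 1) * B * Real.exp (-κ * ξ') := by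
              have key : C' * (1 + R) + R * (C₀ * (1 + R) ^ i) ≤ C₀ * (1 + R) ^ (i + 1) := by
                have hc : C' * (1 + R) ≤ C₀ := by
                  rw [hC₀]
                  have h5 : 0 ≤ C' * (1 + R) * (1 / κ) := by positivity
                  nlinarith
                have h6 : C' * (1 + R) ≤ C₀ * (1 + R) ^ i := by
                  calc C' * (1 + R) ≤ C₀ := hc
                    _ = C₀ * 1 := (mul_one _).symm
                    _ ≤ C₀ * (1 + R) ^ i := by
                      apply mul_le_mul_of_nonneg_left hpow (by linarith)
                have h7 : C₀ * (1 + R) ^ (i + 1) = C₀ * (1 + R) ^ i + R * (C₀ * (1 + R) ^ i) := by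
                  ring
                linarith
              have hBE : 0 ≤ B * Real.exp (-κ * ξ') := by positivity
              calc C' * ((1 + R) * B) * Real.exp (-κ * ξ')
                  + R * (C₀ * (1 + R) ^ i * B * Real.exp (-κ * ξ'))
                  = (C' * (1 + R) + R * (C₀ * (1 + R) ^ i)) * (B * Real.exp (-κ * ξ')) := by ring
                _ ≤ C₀ * (1 + R) ^ (i + 1) * (B * Real.exp (-κ * ξ')) :=
                    mul_le_mul_of_nonneg_right key hBE
                _ = C₀ * (1 + R) ^ (i + 1) * B * Real.exp (-κ * ξ') := by ring
    have h8 := main i hi ξ hξ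
    have h9 : C₀ * (1 + R) ^ i ≤ C₀ * (1 + R) ^ n := by
      apply mul_le_mul_of_nonneg_left _ (by linarith)
      exact pow_le_pow_right₀ (by linarith) (by omega)
    calc ‖iteratedDeriv i w ξ‖ ≤ C₀ * (1 + R) ^ i * B * Real.exp (-κ * ξ) := h8
      _ ≤ C₀ * (1 + R) ^ n * B * Real.exp (-κ * ξ) := by
          apply mul_le_mul_of_nonneg_right _ (Real.exp_pos _).le
          exact mul_le_mul_of_nonneg_right h9 hB

lemma charPoly_eval (m : ℕ) (M : Fin m → ℂ) (z : ℂ) :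
    (charPoly m M).eval z = z ^ m - ∑ j : Fin m, M j * z ^ (j : ℕ) := by
  simp [charPoly, eval_finset_sum]

lemma charPoly_degree_sum_lt (m : ℕ) (hm : 1 ≤ m) (M : Fin m → ℂ) :
    (∑ j : Fin m, Polynomial.C (M j) * X ^ (j : ℕ)).degree < ((m : ℕ) : WithBot ℕ) := by
  apply lt_of_le_of_lt (degree_sum_le _ _)
  rw [Finset.sup_lt_iff (by exact_mod_cast WithBot.bot_lt_coe m)]
  intro j _
  apply lt_of_le_of_lt (degree_C_mul_X_pow_le _ _)
  exact_mod_cast WithBot.coe_lt_coe.mpr j.isLt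

lemma charPoly_monic (m : ℕ) (hm : 1 ≤ m) (M : Fin m → ℂ) : (charPoly m M).Monic := by
  unfold charPoly
  apply monic_X_pow_sub
  exact charPoly_degree_sum_lt m hm M

lemma charPoly_natDegree (m : ℕ) (hm : 1 ≤ m) (M : Fin m → ℂ) :
    (charPoly m M).natDegree = m := by
  apply natDegree_eq_of_degree_eq_some
  unfold charPoly
  rw [degree_sub_eq_left_of_degree_lt, degree_X_pow]
  rw [degree_X_pow]
  exact charPoly_degree_sum_lt m hm M

lemma charPoly_coeff_lt (m : ℕ) (M : Fin m → ℂ) {j : ℕ} (hj : j < m) :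
    (charPoly m M).coeff j = -(M ⟨j, hj⟩) := by
  unfold charPoly
  rw [coeff_sub, coeff_X_pow, if_neg (by omega), finset_sum_coeff]
  rw [Finset.sum_eq_single (⟨j, hj⟩ : Fin m)]
  · simp
  · intro b _ hb
    rw [coeff_C_mul, coeff_X_pow, if_neg, mul_zero]
    intro h
    exact hb (by ext; simp [← h])
  · intro h
    exact absurd (Finset.mem_univ _) h

lemma charPoly_coeff_self (m : ℕ) (M : Fin m → ℂ) : (charPoly m M).coeff m = 1 := by
  unfold charPoly
  rw [coeff_sub, coeff_X_pow, if_pos rfl, finset_sum_coeff]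
  rw [Finset.sum_eq_zero]
  · ring
  intro b _
  rw [coeff_C_mul, coeff_X_pow, if_neg (by have := b.isLt; omega), mul_zero]

lemma charPoly_roots_prod (m : ℕ) (hm : 1 ≤ m) (M : Fin m → ℂ) :
    ∃ l : List ℂ, l.length = m ∧ (∀ r ∈ l, r ∈ (charPoly m M).roots) ∧
      (l.map fun r => X - Polynomial.C r).prod = charPoly m M := by
  have hmonic := charPoly_monic m hm M
  have hsplits : (charPoly m M).Splits := IsAlgClosed.splits _
  refine ⟨(charPoly m M).roots.toList, ?_, ?_, ?_⟩
  · have h1 := hsplits.natDegree_eq_card_roots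
    rw [Multiset.length_toList, ← h1, charPoly_natDegree m hm M]
  · intro r hr
    rwa [← Multiset.mem_toList]
  · have h2 := hsplits.eq_prod_roots_of_monic hmonic
    calc (((charPoly m M).roots.toList).map fun r => X - Polynomial.C r).prod
        = ((↑((charPoly m M).roots.toList) : Multiset ℂ).map fun r => X - Polynomial.C r).prod := by
          rw [Multiset.map_coe, Multiset.prod_coe]
      _ = (((charPoly m M).roots).map fun r => X - Polynomial.C r).prod := by
          rw [Multiset.coe_toList]
      _ = charPoly m M := h2.symm

lemma root_norm_bound (m : ℕ) (hm : 1 ≤ m) (M : Fin m → ℂ) (A : ℝ) (hA : 0 ≤ A)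
    (hM : ∀ j, ‖M j‖ ≤ A) (z : ℂ) (hz : (charPoly m M).eval z = 0) :
    ‖z‖ ≤ 1 + m * A := by
  have hmA : 0 ≤ (m : ℝ) * A := by positivity
  by_cases h1 : ‖z‖ ≤ 1
  · linarith
  push_neg at h1
  have hz1 : (1 : ℝ) ≤ ‖z‖ := h1.le
  have hzm : z ^ m = ∑ j : Fin m, M j * z ^ (j : ℕ) := by
    have h2 : z ^ m - ∑ j : Fin m, M j * z ^ (j : ℕ) = 0 := by
      rw [← charPoly_eval m M z]; exact hz
    exact sub_eq_zero.mp h2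
  have hbound : ‖z‖ ^ m ≤ (m : ℝ) * A * ‖z‖ ^ (m - 1) := by
    calc ‖z‖ ^ m = ‖z ^ m‖ := (norm_pow z m).symm
      _ = ‖∑ j : Fin m, M j * z ^ (j : ℕ)‖ := by rw [hzm]
      _ ≤ ∑ j : Fin m, ‖M j * z ^ (j : ℕ)‖ := norm_sum_le _ _
      _ ≤ ∑ _j : Fin m, A * ‖z‖ ^ (m - 1) := by
          apply Finset.sum_le_sum
          intro j _
          rw [norm_mul, norm_pow]
          apply mul_le_mul (hM j) _ (by positivity) hA
          exact pow_le_pow_right₀ hz1 (by have := j.isLt; omega)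
      _ = (m : ℝ) * A * ‖z‖ ^ (m - 1) := by
          rw [Finset.sum_const, Finset.card_univ, Fintype.card_fin, nsmul_eq_mul]
          ring
  have hsplitpow : ‖z‖ ^ m = ‖z‖ ^ (m - 1) * ‖z‖ := by
    rw [← pow_succ]
    congr 1
    omega
  have hp : 0 < ‖z‖ ^ (m - 1) := by positivity
  nlinarith

lemma sol_opApply (m : ℕ) (hm : 1 ≤ m) (M : Fin m → ℂ) (w : ℝ → ℂ)
    (hdiff : ∀ i < m, Differentiable ℝ (iteratedDeriv i w))
    (hode : ∀ ξ : ℝ, 0 ≤ ξ → iteratedDeriv m w ξ = ∑ j : Fin m, M j * iteratedDeriv (j : ℕ) w ξ)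
    (l : List ℂ) (hlen : l.length = m)
    (hprod : (l.map fun r => X - Polynomial.C r).prod = charPoly m M) :
    ∀ ξ : ℝ, 0 ≤ ξ → UniformDecayAux.opApply l w ξ = 0 := by
  intro ξ hξ
  rw [UniformDecayAux.opApply_eq_sum l w (by rw [hlen]; exact hdiff) ξ, hprod, hlen]
  rw [Finset.sum_range_succ, charPoly_coeff_self m M]
  have hsum : ∑ j ∈ Finset.range m, (charPoly m M).coeff j * iteratedDeriv j w ξ
      = -∑ j : Fin m, M j * iteratedDeriv (j : ℕ) w ξ := by
    rw [← Fin.sum_univ_eq_sum_range (fun j => (charPoly m M).coeff j * iteratedDeriv j w ξ) m]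
    rw [← Finset.sum_neg_distrib]
    apply Finset.sum_congr rfl
    intro j _
    rw [charPoly_coeff_lt m M j.isLt]
    simp
  rw [hsum, hode ξ hξ]
  ring

end UniformDecayAux

/-- if `D_a ⊆ ℂ^m` is closed and bounded and every root of the
characteristic polynomial has strictly negative real part for each `M ∈ D_a`, and
`D_w ⊆ ℂ^m` is bounded, then solutions decay like `C̃ (1 + ξ^{m-1}) e^{-κ ξ}`,
uniformly in `M ∈ D_a` and `N ∈ D_w`. -/
theorem uniform_exp_decay_estimate (m : ℕ) (hm : 1 ≤ m)
    (Da : Set (Fin m → ℂ)) (hDaClosed : IsClosed Da) (hDaBdd : Bornology.IsBounded Da)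
    (hroots : ∀ M ∈ Da, ∀ z ∈ (charPoly m M).roots, z.re < 0)
    (Dw : Set (Fin m → ℂ)) (hDwBdd : Bornology.IsBounded Dw) :
    ∃ Ct : ℝ, 0 ≤ Ct ∧ ∃ κ : ℝ, 0 < κ ∧
      ∀ M ∈ Da, ∀ N ∈ Dw,
        ∀ w : ℝ → ℂ, IsCauchySolution m M N w →
          ∀ i < m, ∀ ξ : ℝ, 0 ≤ ξ →
            ‖iteratedDeriv i w ξ‖ ≤ Ct * (1 + ξ ^ (m - 1)) * Real.exp (-κ * ξ) := by
  classical
  by_cases hne : Da.Nonempty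
  swap
  · exact ⟨0, le_refl 0, 1, one_pos, fun M hM => absurd ⟨M, hM⟩ hne⟩
  -- uniform bounds on coefficients and initial data
  obtain ⟨A0, hA0⟩ := hDaBdd.exists_norm_le
  obtain ⟨W0, hW0⟩ := hDwBdd.exists_norm_le
  set A : ℝ := max A0 0 with hAdef
  set W : ℝ := max W0 0 with hWdef
  have hAnn : 0 ≤ A := le_max_right _ _
  have hWnn : 0 ≤ W := le_max_right _ _
  have hAbd : ∀ M ∈ Da, ∀ j, ‖M j‖ ≤ A := fun M hM j =>
    (norm_le_pi_norm M j).trans ((hA0 M hM).trans (le_max_left _ _))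
  have hWbd : ∀ N ∈ Dw, ∀ j, ‖N j‖ ≤ W := fun N hN j =>
    (norm_le_pi_norm N j).trans ((hW0 N hN).trans (le_max_left _ _))
  set R : ℝ := 1 + m * A with hRdef
  have hRnn : 0 ≤ R := by positivity
  have hChar_ne : ∀ M : Fin m → ℂ, charPoly m M ≠ 0 := fun M =>
    (UniformDecayAux.charPoly_monic m hm M).ne_zero
  -- the compact set of (coefficients, root) pairs
  set K : Set ((Fin m → ℂ) × ℂ) := {p | p.1 ∈ Da ∧ (charPoly m p.1).eval p.2 = 0} with hKdef
  have hKclosed : IsClosed K := by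
    have hKeq : K = (Da ×ˢ Set.univ) ∩
        (fun p : (Fin m → ℂ) × ℂ => p.2 ^ m - ∑ j : Fin m, p.1 j * p.2 ^ (j : ℕ)) ⁻¹' {0} := by
      ext p
      simp only [hKdef, Set.mem_setOf_eq, Set.mem_inter_iff, Set.mem_prod, Set.mem_univ,
        and_true, Set.mem_preimage, Set.mem_singleton_iff, UniformDecayAux.charPoly_eval]
    rw [hKeq]
    apply IsClosed.inter (hDaClosed.prod isClosed_univ)
    apply IsClosed.preimage _ isClosed_singleton
    apply Continuous.sub
    · exact (continuous_snd.pow m)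
    · apply continuous_finset_sum
      intro j _
      exact ((continuous_apply j).comp continuous_fst).mul (continuous_snd.pow (j : ℕ))
  have hKsub : K ⊆ Da ×ˢ Metric.closedBall 0 R := by
    rintro ⟨M, z⟩ ⟨hM, hz⟩
    refine ⟨hM, ?_⟩
    rw [Metric.mem_closedBall, dist_zero_right]
    exact UniformDecayAux.root_norm_bound m hm M A hAnn (hAbd M hM) z hz
  have hKbdd : Bornology.IsBounded K :=
    (hDaBdd.prod Metric.isBounded_closedBall).subset hKsub
  have hKcompact : IsCompact K := Metric.isCompact_of_isClosed_isBounded hKclosed hKbdd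
  have hKne : K.Nonempty := by
    obtain ⟨M0, hM0⟩ := hne
    obtain ⟨l, hlen, hlmem, -⟩ := UniformDecayAux.charPoly_roots_prod m hm M0
    have hlne : l ≠ [] := by
      intro h
      rw [h] at hlen
      simp at hlen
      omega
    obtain ⟨r, hr⟩ := List.exists_mem_of_ne_nil l hlne
    have hroot := hlmem r hr
    rw [Polynomial.mem_roots'] at hroot
    exact ⟨(M0, r), hM0, hroot.2⟩
  obtain ⟨p0, hp0K, hmax⟩ := hKcompact.exists_isMaxOn hKne
    ((Complex.continuous_re.comp continuous_snd).continuousOn)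
  have hp0root : p0.2 ∈ (charPoly m p0.1).roots := by
    rw [Polynomial.mem_roots']
    exact ⟨hChar_ne p0.1, hp0K.2⟩
  have hp0neg : p0.2.re < 0 := hroots p0.1 hp0K.1 p0.2 hp0root
  set κ : ℝ := -p0.2.re / 2 with hκdef
  have hκ : 0 < κ := by rw [hκdef]; linarith
  have hre_bd : ∀ M ∈ Da, ∀ z : ℂ, (charPoly m M).eval z = 0 → z.re ≤ -(2 * κ) := by
    intro M hM z hz
    have hzK : (M, z) ∈ K := ⟨hM, hz⟩
    have hle := hmax hzK
    simp only [Function.comp] at hle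
    rw [hκdef]
    calc z.re ≤ p0.2.re := hle
      _ = -(2 * (-p0.2.re / 2)) := by ring
  obtain ⟨C, hC, hdecay⟩ := UniformDecayAux.list_decay κ R hκ hRnn m
  refine ⟨C * W, by positivity, κ, hκ, ?_⟩
  intro M hM N hN w hsol i hi ξ hξ
  obtain ⟨l, hlen, hlmem, hlprod⟩ := UniformDecayAux.charPoly_roots_prod m hm M
  have hlprops : ∀ r ∈ l, ‖r‖ ≤ R ∧ r.re ≤ -(2 * κ) := by
    intro r hr
    have hroot := hlmem r hr
    rw [Polynomial.mem_roots'] at hroot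
    constructor
    · rw [hRdef]
      exact UniformDecayAux.root_norm_bound m hm M A hAnn (hAbd M hM) r hroot.2
    · exact hre_bd M hM r hroot.2
  have hop := UniformDecayAux.sol_opApply m hm M w hsol.1 hsol.2.1 l hlen hlprod
  have hinit : ∀ j < m, ‖iteratedDeriv j w 0‖ ≤ W := by
    intro j hj
    have hj2 := hsol.2.2 ⟨j, hj⟩
    simp only at hj2
    rw [hj2]
    exact hWbd N hN ⟨j, hj⟩
  have hmain := hdecay l hlen hlprops w hsol.1 hop W hWnn hinit i hi ξ hξ
  have hpow : 0 ≤ ξ ^ (m - 1) := pow_nonneg hξ _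
  calc ‖iteratedDeriv i w ξ‖ ≤ C * W * Real.exp (-κ * ξ) := hmain
    _ ≤ C * W * (1 + ξ ^ (m - 1)) * Real.exp (-κ * ξ) := by
        apply mul_le_mul_of_nonneg_right _ (Real.exp_pos _).le
        nlinarith [mul_nonneg (mul_nonneg hC hWnn) hpow]
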